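/- arXiv:1806.05936 — 3 statements merged into one kernel-verified Lean document; each statement's English description precedes it below -/
import Mathlib

section
/- Fix an integer k ≥ 2. There exists a constant c_k ∈ ℕ such that for every n, every k-hypergraph G = (V, E) with |V| = n and edge pseudo-density p = |E|/n^k, and every natural number u with c_k ≤ u ≤ n, there exists a subset U ⊆ V with |U| = u such that e(U) ≥ 0.99 · p · u^k. -/
/-- A `k`-hypergraph on the vertex type `V`: a multiset of hyperedges, each a
`k`-element subset of `V` (repeated hyperedges allowed). -/
structure HG (k : ℕ) (V : Type) where
  E : Multiset (Finset V)
  uniform : ∀ e ∈ E, e.card = k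

open scoped Classical in
/-- `eU G U` is the number of hyperedges of `G` (with multiplicity) all of whose
vertices lie in `U`. -/
noncomputable def eU {k : ℕ} {V : Type} (G : HG k V) (U : Finset V) : ℕ :=
  Multiset.card (G.E.filter (fun e => e ⊆ U))

open scoped Classical in
/-- Counting supersets of a fixed set of prescribed size. -/
lemma card_supersets {α : Type} [Fintype α] (e : Finset α) (u : ℕ) (hu : e.card ≤ u) :
    ((Finset.univ.powersetCard u).filter (fun U => e ⊆ U)).card
      = (Fintype.card α - e.card).choose (u - e.card) := by
  rw [← Finset.card_compl e, ← Finset.card_powersetCard]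
  apply Finset.card_bij' (fun U _ => U \ e) (fun T _ => T ∪ e)
  · intro U hU
    simp only [Finset.mem_filter, Finset.mem_powersetCard] at hU
    obtain ⟨⟨-, hcard⟩, hsub⟩ := hU
    simp only [Finset.mem_powersetCard]
    constructor
    · intro x hx
      simp only [Finset.mem_sdiff] at hx
      simp [Finset.mem_compl, hx.2]
    · rw [Finset.card_sdiff_of_subset hsub, hcard]
  · intro T hT
    simp only [Finset.mem_powersetCard] at hT
    obtain ⟨hsub, hcard⟩ := hT
    have hdisj : Disjoint T e := by
      rw [Finset.disjoint_right]
      intro x hx hxT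
      have := hsub hxT
      simp [Finset.mem_compl] at this
      exact this hx
    simp only [Finset.mem_filter, Finset.mem_powersetCard]
    refine ⟨⟨Finset.subset_univ _, ?_⟩, Finset.subset_union_right⟩
    rw [Finset.card_union_of_disjoint hdisj, hcard]
    omega
  · intro U hU
    simp only [Finset.mem_filter, Finset.mem_powersetCard] at hU
    exact Finset.sdiff_union_of_subset hU.2
  · intro T hT
    simp only [Finset.mem_powersetCard] at hT
    have hdisj : Disjoint T e := by
      rw [Finset.disjoint_right]
      intro x hx hxT
      have := hT.1 hxT
      simp [Finset.mem_compl] at this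
      exact this hx
    exact Finset.union_sdiff_cancel_right hdisj

open scoped Classical in
lemma sum_filter_card {V : Type} [Fintype V] (k u : ℕ) (hku : k ≤ u)
    (M : Multiset (Finset V)) (hM : ∀ e ∈ M, e.card = k) :
    ∑ U ∈ Finset.univ.powersetCard u, Multiset.card (M.filter (fun e => e ⊆ U))
      = Multiset.card M * (Fintype.card V - k).choose (u - k) := by
  induction M using Multiset.induction_on with
  | empty => simp
  | cons a s ih =>
    have ha : a.card = k := hM a (Multiset.mem_cons_self a s)
    have hs : ∀ e ∈ s, e.card = k := fun e he => hM e (Multiset.mem_cons_of_mem he)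
    have step : ∀ U : Finset V,
        Multiset.card ((a ::ₘ s).filter (fun e => e ⊆ U))
          = (if a ⊆ U then 1 else 0) + Multiset.card (s.filter (fun e => e ⊆ U)) := by
      intro U
      rw [Multiset.filter_cons, Multiset.card_add]
      congr 1
      split_ifs <;> simp
    simp only [step]
    rw [Finset.sum_add_distrib, ih hs]
    have : ∑ U ∈ Finset.univ.powersetCard u, (if a ⊆ U then 1 else 0)
        = ((Finset.univ.powersetCard u).filter (fun U => a ⊆ U)).card := by
      rw [Finset.card_filter]
    rw [this, card_supersets a u (by rw [ha]; exact hku), ha,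
      Multiset.card_cons]
    ring

/-- The key real inequality: `0.99 * u^k ≤ u·(u-1)···(u-k+1)` when `100·k² ≤ u`. -/
lemma descFactorial_key (k u : ℕ) (hk : 2 ≤ k) (hu : 100 * k ^ 2 ≤ u) :
    (0.99 : ℝ) * (u : ℝ) ^ k ≤ (u.descFactorial k : ℝ) := by
  have hku : k ≤ u := le_trans (by nlinarith) hu
  have hu0 : (0 : ℝ) < u := by
    have : 0 < u := lt_of_lt_of_le (by positivity) hu
    exact_mod_cast this
  have hnat : (u - k) ^ k ≤ u.descFactorial k := by
    calc (u - k) ^ k ≤ (u + 1 - k) ^ k := Nat.pow_le_pow_left (by omega) k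
    _ ≤ u.descFactorial k := Nat.pow_sub_le_descFactorial u k
  have hcast : ((u - k : ℕ) : ℝ) = (u : ℝ) - k := by
    push_cast [Nat.cast_sub hku]; ring
  have hreal : ((u : ℝ) - k) ^ k ≤ (u.descFactorial k : ℝ) := by
    rw [← hcast]
    exact_mod_cast hnat
  refine le_trans ?_ hreal
  -- Bernoulli
  set a : ℝ := -((k : ℝ) / u) with ha
  have hk_le_u : (k : ℝ) ≤ u := by exact_mod_cast hku
  have ha2 : (-2 : ℝ) ≤ a := by
    rw [ha]
    have : (k : ℝ) / u ≤ 1 := by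
      rw [div_le_one hu0]; exact hk_le_u
    linarith
  have hbern : 1 + (k : ℝ) * a ≤ (1 + a) ^ k := one_add_mul_le_pow ha2 k
  have hka : 1 + (k : ℝ) * a = 1 - (k : ℝ) ^ 2 / u := by
    rw [ha]; ring
  have hsmall : (k : ℝ) ^ 2 / u ≤ 1 / 100 := by
    rw [div_le_div_iff₀ hu0 (by norm_num)]
    have : (100 : ℝ) * (k : ℝ) ^ 2 ≤ u := by exact_mod_cast hu
    linarith
  have h99 : (0.99 : ℝ) ≤ (1 + a) ^ k := by
    refine le_trans ?_ hbern
    rw [hka]; norm_num; linarith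
  have hfac : ((u : ℝ) - k) ^ k = (1 + a) ^ k * (u : ℝ) ^ k := by
    rw [← mul_pow]
    congr 1
    rw [ha]
    field_simp
    ring
  rw [hfac]
  exact mul_le_mul_of_nonneg_right h99 (by positivity)

/-- Every `k`-hypergraph on `n` vertices with edge pseudo-density `p = |E|/nᵏ` has,
for every `c_k ≤ u ≤ n`, a vertex subset of size `u` inducing at least `0.99·p·uᵏ`
hyperedges, where `c_k` depends only on `k`. -/
theorem dense_subset_exists (k : ℕ) (hk : 2 ≤ k) :
    ∃ c : ℕ, ∀ (V : Type) [Fintype V] (G : HG k V) (n u : ℕ),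
      Fintype.card V = n → c ≤ u → u ≤ n →
      ∃ U : Finset V, U.card = u ∧
        (0.99 : ℝ) * ((Multiset.card G.E : ℝ) / (n : ℝ) ^ k) * (u : ℝ) ^ k ≤ (eU G U : ℝ) := by
  classical
  refine ⟨100 * k ^ 2, ?_⟩
  intro V _ G n u hn hcu hun
  have hku : k ≤ u := le_trans (by nlinarith) hcu
  have hkn : k ≤ n := le_trans hku hun
  have hu0 : 0 < u := lt_of_lt_of_le (by positivity) hcu
  have hn0 : 0 < n := lt_of_lt_of_le hu0 hun
  set S := (Finset.univ : Finset V).powersetCard u with hS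
  have hScard : S.card = n.choose u := by
    rw [hS, Finset.card_powersetCard, Finset.card_univ, hn]
  have hSne : S.Nonempty := by
    rw [hS, Finset.powersetCard_nonempty, Finset.card_univ, hn]; exact hun
  -- total count
  have hsum : ∑ U ∈ S, (eU G U : ℝ)
      = (Multiset.card G.E : ℝ) * ((n - k).choose (u - k) : ℝ) := by
    have := sum_filter_card (V := V) k u hku G.E G.uniform
    rw [hn] at this
    have : ∑ U ∈ S, eU G U = Multiset.card G.E * (n - k).choose (u - k) := by
      rw [hS]
      convert this using 2
      simp only [eU]
    calc ∑ U ∈ S, (eU G U : ℝ) = ((∑ U ∈ S, eU G U : ℕ) : ℝ) := by push_cast; ring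
      _ = _ := by rw [this]; push_cast; ring
  -- averaging
  set q : ℝ := (Multiset.card G.E : ℝ) * ((n - k).choose (u - k) : ℝ) / (n.choose u : ℝ)
    with hq
  have hchoose_pos : (0 : ℝ) < (n.choose u : ℝ) := by
    exact_mod_cast Nat.choose_pos hun
  obtain ⟨U, hUS, hUe⟩ : ∃ U ∈ S, q ≤ (eU G U : ℝ) := by
    apply Finset.exists_le_of_sum_le hSne
    rw [Finset.sum_const, hScard, hsum, nsmul_eq_mul, hq]
    rw [mul_div_assoc]
    rw [mul_comm ((n.choose u : ℝ)) _, mul_assoc]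
    rw [div_mul_cancel₀ _ (ne_of_gt hchoose_pos)]
  have hUcard : U.card = u := by
    rw [hS] at hUS
    exact (Finset.mem_powersetCard.mp hUS).2
  refine ⟨U, hUcard, le_trans ?_ hUe⟩
  -- final inequality: 0.99 * (|E|/n^k) * u^k ≤ q
  rw [hq]
  have hE0 : (0 : ℝ) ≤ (Multiset.card G.E : ℝ) := Nat.cast_nonneg _
  have hnk0 : (0 : ℝ) < (n : ℝ) ^ k := by positivity
  have key : (0.99 : ℝ) * (u : ℝ) ^ k * (n.choose u : ℝ)
      ≤ (n : ℝ) ^ k * ((n - k).choose (u - k) : ℝ) := by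
    have hid : (n.choose u : ℝ) * (u.choose k : ℝ)
        = (n.choose k : ℝ) * ((n - k).choose (u - k) : ℝ) := by
      exact_mod_cast congrArg (Nat.cast (R := ℝ)) (Nat.choose_mul (n := n) hku)
    have hck_pos : (0 : ℝ) < (n.choose k : ℝ) := by
      exact_mod_cast Nat.choose_pos hkn
    have hfac_pos : (0 : ℝ) < (k.factorial : ℝ) := by
      exact_mod_cast k.factorial_pos
    have hdn : (n.descFactorial k : ℝ) = (k.factorial : ℝ) * (n.choose k : ℝ) := by
      exact_mod_cast congrArg (Nat.cast (R := ℝ)) (Nat.descFactorial_eq_factorial_mul_choose n k)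
    have hdu : (u.descFactorial k : ℝ) = (k.factorial : ℝ) * (u.choose k : ℝ) := by
      exact_mod_cast congrArg (Nat.cast (R := ℝ)) (Nat.descFactorial_eq_factorial_mul_choose u k)
    have hdn_le : (n.descFactorial k : ℝ) ≤ (n : ℝ) ^ k := by
      exact_mod_cast Nat.descFactorial_le_pow n k
    have hdu_ge : (0.99 : ℝ) * (u : ℝ) ^ k ≤ (u.descFactorial k : ℝ) :=
      descFactorial_key k u hk hcu
    have hmain : (0.99 : ℝ) * (u : ℝ) ^ k * (n.descFactorial k : ℝ)
        ≤ (n : ℝ) ^ k * (u.descFactorial k : ℝ) := by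
      calc (0.99 : ℝ) * (u : ℝ) ^ k * (n.descFactorial k : ℝ)
          ≤ (0.99 : ℝ) * (u : ℝ) ^ k * (n : ℝ) ^ k := by
            apply mul_le_mul_of_nonneg_left hdn_le (by positivity)
        _ ≤ (u.descFactorial k : ℝ) * (n : ℝ) ^ k :=
            mul_le_mul_of_nonneg_right hdu_ge (le_of_lt hnk0)
        _ = (n : ℝ) ^ k * (u.descFactorial k : ℝ) := mul_comm _ _
    rw [hdn, hdu] at hmain
    have h1 : (0.99 : ℝ) * (u : ℝ) ^ k * (n.choose k : ℝ) ≤ (n : ℝ) ^ k * (u.choose k : ℝ) := by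
      nlinarith [hfac_pos]
    have hnu0 : (0 : ℝ) ≤ (n.choose u : ℝ) := Nat.cast_nonneg _
    have h2 := mul_le_mul_of_nonneg_right h1 hnu0
    nlinarith [h2, hid, hck_pos]
  have hdiv : (0.99 : ℝ) * (u : ℝ) ^ k / (n : ℝ) ^ k
      ≤ (((n - k).choose (u - k) : ℕ) : ℝ) / (n.choose u : ℝ) := by
    rw [div_le_div_iff₀ hnk0 hchoose_pos]
    linarith [key]
  calc (0.99 : ℝ) * ((Multiset.card G.E : ℝ) / (n : ℝ) ^ k) * (u : ℝ) ^ k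
      = (Multiset.card G.E : ℝ) * ((0.99 : ℝ) * (u : ℝ) ^ k / (n : ℝ) ^ k) := by ring
    _ ≤ (Multiset.card G.E : ℝ) * ((((n - k).choose (u - k) : ℕ) : ℝ) / (n.choose u : ℝ)) :=
        mul_le_mul_of_nonneg_left hdiv hE0
    _ = (Multiset.card G.E : ℝ) * (((n - k).choose (u - k) : ℕ) : ℝ) / (n.choose u : ℝ) := by
        ring
end

section
/- Let k ≥ 2 be an integer and β ∈ (0,1) a real number. There exists n₀ ∈ ℕ such that for every n ≥ n₀ and every k-hypergraph G with 2^n vertices and m hyperedges (counted with multiplicity), there exists a set A of vertices of G with |A| = ⌊2^{βn}⌋ such that the number of hyperedges of G incident on at least one vertex of A is at least (k/4)·2^{(β−1)n}·m. -/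
open scoped Classical

lemma deg_sum {k : ℕ} {V : Type} [Fintype V] [DecidableEq V]
    (S : Multiset (Finset V)) (h : ∀ e ∈ S, e.card = k) :
    ∑ v : V, Multiset.card (S.filter (fun e => v ∈ e)) = k * Multiset.card S := by
  induction S using Multiset.induction with
  | empty => simp
  | cons e S ih =>
    have he : e.card = k := h e (Multiset.mem_cons_self e S)
    have hS : ∀ e' ∈ S, e'.card = k := fun e' h' => h e' (Multiset.mem_cons_of_mem h')
    have key : ∀ v : V, Multiset.card ((e ::ₘ S).filter (fun e' => v ∈ e'))
        = (if v ∈ e then 1 else 0) + Multiset.card (S.filter (fun e' => v ∈ e')) := by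
      intro v
      rw [Multiset.filter_cons, Multiset.card_add]
      congr 1
      split <;> simp
    simp only [key, Finset.sum_add_distrib, ih hS, Multiset.card_cons]
    have : ∑ v : V, (if v ∈ e then 1 else 0) = e.card := by
      rw [Finset.sum_ite_mem]
      simp
    rw [this, he]
    ring

lemma greedy {k : ℕ} {V : Type} [Fintype V] [DecidableEq V]
    (G : HG k V) (hkN : k ≤ Fintype.card V) :
    ∀ j : ℕ, j ≤ Fintype.card V →
      ∃ A : Finset V, A.card = j ∧
        (Multiset.card (G.E.filter (fun e => e ∩ A = ∅)) : ℝ) ≤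
          (Multiset.card G.E : ℝ) * (1 - k / Fintype.card V) ^ j := by
  intro j
  induction j with
  | zero =>
    intro _
    exact ⟨∅, Finset.card_empty, by
      simpa using Nat.cast_le.mpr (Multiset.card_le_card (Multiset.filter_le _ _))⟩
  | succ j ih =>
    intro hj
    obtain ⟨A, hA, hle⟩ := ih (Nat.le_of_succ_le hj)
    set N := Fintype.card V with hN
    have hjN : j < N := Nat.lt_of_succ_le hj
    set S := G.E.filter (fun e => e ∩ A = ∅) with hSdef
    have hSunif : ∀ e ∈ S, e.card = k := fun e he =>
      G.uniform e (Multiset.mem_of_mem_filter he)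
    have hzero : ∀ v ∈ A, Multiset.card (S.filter (fun e => v ∈ e)) = 0 := by
      intro v hv
      rw [Multiset.card_eq_zero, Multiset.filter_eq_nil]
      intro e heS hve
      have := (Multiset.mem_filter.mp heS).2
      exact absurd (Finset.eq_empty_iff_forall_notMem.mp this v
        (Finset.mem_inter.mpr ⟨hve, hv⟩)) (fun h => h)
    have hsum : ∑ v ∈ Aᶜ, Multiset.card (S.filter (fun e => v ∈ e))
        = k * Multiset.card S := by
      rw [← deg_sum S hSunif, ← Finset.sum_add_sum_compl A]
      rw [Finset.sum_eq_zero hzero, zero_add]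
    have hAcne : Aᶜ.Nonempty := by
      rw [← Finset.card_pos, Finset.card_compl, hA]
      omega
    have hAc : Aᶜ.card = N - j := by rw [Finset.card_compl, hA]
    obtain ⟨v, hvAc, hv⟩ : ∃ v ∈ Aᶜ,
        k * Multiset.card S ≤ (N - j) * Multiset.card (S.filter (fun e => v ∈ e)) := by
      apply Finset.exists_le_of_sum_le hAcne
      rw [Finset.sum_const, hAc, ← Finset.mul_sum, hsum, smul_eq_mul]
    have hvA : v ∉ A := Finset.mem_compl.mp hvAc
    refine ⟨insert v A, by rw [Finset.card_insert_of_notMem hvA, hA], ?_⟩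
    have hfilt : G.E.filter (fun e => e ∩ insert v A = ∅)
        = S.filter (fun e => v ∉ e) := by
      rw [hSdef, Multiset.filter_filter]
      apply Multiset.filter_congr
      intro e _
      rw [Finset.insert_eq, Finset.inter_union_distrib_left, Finset.union_eq_empty,
        Finset.inter_comm]
      by_cases hve : v ∈ e <;>
        simp [Finset.singleton_inter_of_mem, Finset.singleton_inter_of_notMem, hve]
    have hcard : Multiset.card (S.filter (fun e => v ∉ e))
        = Multiset.card S - Multiset.card (S.filter (fun e => v ∈ e)) := by
      have := Multiset.filter_add_not (fun e => v ∈ e) S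
      have hc : Multiset.card (S.filter (fun e => v ∈ e))
          + Multiset.card (S.filter (fun e => ¬ v ∈ e)) = Multiset.card S := by
        rw [← Multiset.card_add, this]
      omega
    have hN0 : 0 < N := Nat.lt_of_le_of_lt (Nat.zero_le j) hjN
    have hNpos : (0:ℝ) < N := by exact_mod_cast hN0
    have hdegle : Multiset.card (S.filter (fun e => v ∈ e)) ≤ Multiset.card S :=
      Multiset.card_le_card (Multiset.filter_le _ _)
    set d := Multiset.card (S.filter (fun e => v ∈ e)) with hd
    set s := Multiset.card S with hs
    have hvR : (k:ℝ) * s ≤ ((N:ℝ) - j) * d := by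
      have := (Nat.cast_le (α := ℝ)).mpr hv
      push_cast [Nat.cast_sub (le_of_lt hjN)] at this
      linarith
    have hstep : (s:ℝ) - d ≤ (s:ℝ) * (1 - k / N) := by
      have hNj : (0:ℝ) < (N:ℝ) - j := by
        have : (j:ℝ) < N := by exact_mod_cast hjN
        linarith
      have h1 : (k:ℝ) * s / N ≤ (k:ℝ) * s / ((N:ℝ) - j) := by
        apply div_le_div_of_nonneg_left _ hNj
        · have : (0:ℝ) ≤ j := Nat.cast_nonneg j
          linarith
        · positivity
      have h2 : (k:ℝ) * s / ((N:ℝ) - j) ≤ d := by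
        rw [div_le_iff₀ hNj]
        linarith [hvR]
      have : (k:ℝ) * s / N ≤ d := le_trans h1 h2
      have expand : (s:ℝ) * (1 - k / N) = s - k * s / N := by ring
      linarith
    rw [hfilt]
    push_cast [hcard, Nat.cast_sub hdegle]
    calc ((s:ℝ) - d) ≤ (s:ℝ) * (1 - k/N) := hstep
      _ ≤ ((Multiset.card G.E : ℝ) * (1 - k / N) ^ j) * (1 - k/N) := by
          apply mul_le_mul_of_nonneg_right hle
          have hkNR : (k:ℝ) ≤ N := by exact_mod_cast hkN
          rw [sub_nonneg, div_le_one hNpos]; exact hkNR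
      _ = (Multiset.card G.E : ℝ) * (1 - k / N) ^ (j+1) := by ring

lemma rpow_nat_tendsto (c : ℝ) (hc : 0 < c) :
    Filter.Tendsto (fun n : ℕ => (2:ℝ) ^ (c * n)) Filter.atTop Filter.atTop := by
  have h2 : 1 < (2:ℝ) ^ c := by
    rw [Real.one_lt_rpow_iff_of_pos two_pos]
    exact Or.inl ⟨one_lt_two, hc⟩
  have heq : ∀ n : ℕ, ((2:ℝ) ^ c) ^ n = (2:ℝ) ^ (c * n) := fun n => by
    rw [← Real.rpow_natCast ((2:ℝ)^c) n, ← Real.rpow_mul (by norm_num)]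
  exact Filter.Tendsto.congr heq (tendsto_pow_atTop_atTop_of_one_lt h2)

/-- For `k ≥ 2` and `β ∈ (0,1)`: for all large `n`, every `k`-hypergraph on `2ⁿ`
vertices with `m` hyperedges has a vertex set `A` of size `⌊2^{βn}⌋` meeting at
least `(k/4)·2^{(β−1)n}·m` hyperedges. -/
theorem hitting_set_exists (k : ℕ) (hk : 2 ≤ k) (β : ℝ) (hβ : β ∈ Set.Ioo (0:ℝ) 1) :
    ∃ n₀ : ℕ, ∀ n : ℕ, n₀ ≤ n → ∀ G : HG k (Fin (2 ^ n)),
      ∃ A : Finset (Fin (2 ^ n)), A.card = ⌊(2:ℝ) ^ (β * n)⌋₊ ∧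
        ((k : ℝ) / 4) * (2:ℝ) ^ ((β - 1) * n) * (Multiset.card G.E : ℝ) ≤
          (Multiset.card (G.E.filter (fun e => (e ∩ A).Nonempty)) : ℝ) := by
  obtain ⟨hβ0, hβ1⟩ := hβ
  obtain ⟨n₁, h1⟩ := Filter.eventually_atTop.mp
    ((rpow_nat_tendsto β hβ0).eventually_ge_atTop 2)
  obtain ⟨n₂, h2⟩ := Filter.eventually_atTop.mp
    ((rpow_nat_tendsto (1 - β) (by linarith)).eventually_ge_atTop (k:ℝ))
  refine ⟨max n₁ n₂, fun n hn G => ?_⟩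
  have hb2 : (2:ℝ) ≤ 2 ^ (β * n) := h1 n (le_trans (le_max_left _ _) hn)
  have hkb : (k:ℝ) ≤ 2 ^ ((1 - β) * n) := h2 n (le_trans (le_max_right _ _) hn)
  set a := ⌊(2:ℝ) ^ (β * n)⌋₊ with hadef
  have hbpos : (0:ℝ) < 2 ^ (β * n) := Real.rpow_pos_of_pos two_pos _
  have haR : (a:ℝ) ≤ 2 ^ (β * n) := Nat.floor_le (le_of_lt hbpos)
  have ha2 : 2 ^ (β * n) / 2 ≤ (a:ℝ) := by
    have := Nat.sub_one_lt_floor ((2:ℝ) ^ (β * n))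
    linarith
  have ha1R : (1:ℝ) ≤ (a:ℝ) := by linarith
  set NR := (2:ℝ) ^ (n:ℕ) with hNRdef
  have hNRpos : (0:ℝ) < NR := by positivity
  have hNReq : NR = (2:ℝ) ^ ((n:ℕ):ℝ) := by
    rw [Real.rpow_natCast]
  have hak : (a:ℝ) * k ≤ NR := by
    have hm : (a:ℝ) * k ≤ 2 ^ (β * n) * 2 ^ ((1 - β) * n) :=
      mul_le_mul haR hkb (Nat.cast_nonneg k) (le_of_lt hbpos)
    have he : (2:ℝ) ^ (β * n) * 2 ^ ((1 - β) * n) = NR := by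
      rw [← Real.rpow_add two_pos, hNReq]
      ring_nf
    rw [he] at hm
    linarith
  have hkR : (k:ℝ) ≤ NR := by nlinarith [Nat.cast_nonneg (α := ℝ) k]
  have hNcast : ((2 ^ n : ℕ) : ℝ) = NR := by push_cast; rfl
  have hkN : k ≤ 2 ^ n := by
    rw [← Nat.cast_le (α := ℝ), hNcast]; exact hkR
  have haN : a ≤ 2 ^ n := by
    rw [← Nat.cast_le (α := ℝ), hNcast]
    have hk2 : (2:ℝ) ≤ k := by exact_mod_cast hk
    nlinarith
  obtain ⟨A, hAcard, hunhit⟩ := greedy G (by simpa using hkN) a (by simpa using haN)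
  refine ⟨A, hAcard, ?_⟩
  simp only [Fintype.card_fin] at hunhit
  rw [hNcast] at hunhit
  set m := Multiset.card G.E with hm
  set x := (k:ℝ) / NR with hx
  have hx0 : (0:ℝ) ≤ x := by positivity
  have hx1 : x ≤ 1 := by rw [hx, div_le_one hNRpos]; exact hkR
  have hax : (a:ℝ) * x ≤ 1 := by
    rw [hx, ← mul_div_assoc, div_le_one hNRpos]
    exact hak
  have hax0 : (0:ℝ) ≤ (a:ℝ) * x := by positivity
  have hpow : (1 - x) ^ a ≤ 1 / (1 + a * x) := by
    have hb : (1:ℝ) + a * x ≤ (1 + x) ^ a := by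
      have := one_add_mul_le_pow (a := x) (by linarith) a
      linarith [this]
    have hprod : (1 - x) ^ a * (1 + x) ^ a ≤ 1 := by
      rw [← mul_pow]
      have heq : (1 - x) * (1 + x) = 1 - x ^ 2 := by ring
      rw [heq]
      apply pow_le_one₀ (by nlinarith) (by nlinarith)
    rw [le_div_iff₀ (by positivity)]
    calc (1 - x) ^ a * (1 + a * x) ≤ (1 - x) ^ a * (1 + x) ^ a :=
          mul_le_mul_of_nonneg_left hb (pow_nonneg (by linarith) a)
      _ ≤ 1 := hprod
  -- split hit and unhit
  have hsplit : Multiset.card (G.E.filter (fun e => (e ∩ A).Nonempty))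
      + Multiset.card (G.E.filter (fun e => e ∩ A = ∅)) = m := by
    have hnot : G.E.filter (fun e => ¬ (e ∩ A).Nonempty)
        = G.E.filter (fun e => e ∩ A = ∅) := by
      apply Multiset.filter_congr
      intro e _
      simp [Finset.not_nonempty_iff_eq_empty]
    rw [← hnot, ← Multiset.card_add, Multiset.filter_add_not]
  have hsplitR : (Multiset.card (G.E.filter (fun e => (e ∩ A).Nonempty)) : ℝ)
      + (Multiset.card (G.E.filter (fun e => e ∩ A = ∅)) : ℝ) = (m:ℝ) := by
    exact_mod_cast hsplit
  have hm0 : (0:ℝ) ≤ m := Nat.cast_nonneg m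
  have hkey : (k:ℝ) / 4 * 2 ^ ((β - 1) * n) ≤ (a:ℝ) * x / 2 := by
    have h2exp : (2:ℝ) ^ ((β - 1) * n) = 2 ^ (β * n) / NR := by
      rw [hNReq, ← Real.rpow_sub two_pos]
      ring_nf
    rw [h2exp, hx]
    have hk0 : (0:ℝ) ≤ k := Nat.cast_nonneg k
    have hu2a : (2:ℝ) ^ (β * n) ≤ 2 * a := by linarith
    calc (k:ℝ) / 4 * (2 ^ (β * n) / NR) ≤ (k:ℝ) / 4 * (2 * a / NR) := by
          apply mul_le_mul_of_nonneg_left _ (by positivity)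
          exact div_le_div_of_nonneg_right hu2a hNRpos.le
      _ = (a:ℝ) * ((k:ℝ) / NR) / 2 := by ring
  -- final chain
  have hchain : (k:ℝ) / 4 * 2 ^ ((β - 1) * n) * m
      ≤ (m:ℝ) - m * (1 - x) ^ a := by
    have s1 : (k:ℝ) / 4 * 2 ^ ((β - 1) * n) * m ≤ ((a:ℝ) * x / 2) * m :=
      mul_le_mul_of_nonneg_right hkey hm0
    have s2 : ((a:ℝ) * x / 2) * m ≤ ((a:ℝ) * x / (1 + a * x)) * m := by
      apply mul_le_mul_of_nonneg_right _ hm0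
      apply div_le_div_of_nonneg_left hax0 (by positivity)
      linarith
    have s3 : ((a:ℝ) * x / (1 + a * x)) * m = (1 - 1 / (1 + a * x)) * m := by
      have hpos : (0:ℝ) < 1 + a * x := by positivity
      field_simp
      ring
    have s4 : (1 - 1 / (1 + (a:ℝ) * x)) * m ≤ (1 - (1 - x) ^ a) * m :=
      mul_le_mul_of_nonneg_right (by linarith [hpow]) hm0
    have s5 : (1 - (1 - x) ^ a) * (m:ℝ) = m - m * (1 - x) ^ a := by ring
    linarith
  have hunhit' : (Multiset.card (G.E.filter (fun e => e ∩ A = ∅)) : ℝ)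
      ≤ m * (1 - x) ^ a := hunhit
  linarith
end

section
/- There exists n₀ ∈ ℕ such that for every n ≥ n₀, every integer k ≥ 1, and every natural number f with n ≤ f ≤ n·k − 3, there exists a directed k-hypergraph E on a vertex set V with |V| = 2^n such that |E| ≥ 2^f and every subset U ⊆ V with |U| < 2^{n − (f−n)/k} satisfies e(U) ≤ 2^{n+6}. -/
open Nat Finset

private lemma fact_lb : ∀ m : ℕ, 2 ^ (m * 2 ^ (m + 2) + m + 4) ≤ (2 ^ (m + 2))! := by
  intro m
  induction m with
  | zero => norm_num [Nat.factorial]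
  | succ m ih =>
      have hpow : (2:ℕ) ^ (m + 3) = 2 * 2 ^ (m + 2) := by ring
      have hsub : (2:ℕ) ^ (m + 3) - 2 ^ (m + 2) = 2 ^ (m + 2) := by
        rw [hpow]; omega
      have hle : (2:ℕ) ^ (m + 2) ≤ 2 ^ (m + 3) :=
        Nat.pow_le_pow_right (by norm_num) (by omega)
      have hfac : (2 ^ (m + 3)).choose (2 ^ (m + 2)) * (2 ^ (m + 2))! * (2 ^ (m + 2))!
          = (2 ^ (m + 3))! := by
        have := Nat.choose_mul_factorial_mul_factorial hle
        rwa [hsub] at this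
      have hC : 2 ^ (2 ^ (m + 3)) ≤ 2 ^ (m + 2) * (2 ^ (m + 3)).choose (2 ^ (m + 2)) := by
        have h4 : 4 ≤ 2 ^ (m + 2) := by
          have : (2:ℕ) ^ 2 ≤ 2 ^ (m + 2) := Nat.pow_le_pow_right (by norm_num) (by omega)
          simpa using this
        have := (Nat.four_pow_lt_mul_centralBinom (2 ^ (m + 2)) h4).le
        have h4p : (4:ℕ) ^ (2 ^ (m + 2)) = 2 ^ (2 ^ (m + 3)) := by
          rw [show (4:ℕ) = 2 ^ 2 by norm_num, ← pow_mul, hpow]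
        rwa [Nat.centralBinom, ← hpow, h4p] at this
      -- main chain, everything multiplied by 2^(m+2)
      have key : 2 ^ (m + 2) * 2 ^ ((m + 1) * 2 ^ (m + 3) + (m + 1) + 4)
          ≤ 2 ^ (m + 2) * (2 ^ (m + 3))! := by
        calc 2 ^ (m + 2) * 2 ^ ((m + 1) * 2 ^ (m + 3) + (m + 1) + 4)
            = 2 ^ ((m + 2) + ((m + 1) * 2 ^ (m + 3) + (m + 1) + 4)) := by rw [← pow_add]
          _ ≤ 2 ^ (2 ^ (m + 3) + ((m * 2 ^ (m + 2) + m + 4) + (m * 2 ^ (m + 2) + m + 4))) := by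
              apply Nat.pow_le_pow_right (by norm_num)
              have : (m + 1) * 2 ^ (m + 3) = m * 2 ^ (m + 3) + 2 ^ (m + 3) := by ring
              have h2 : m * 2 ^ (m + 3) = m * 2 ^ (m + 2) + m * 2 ^ (m + 2) := by
                rw [hpow]; ring
              omega
          _ = 2 ^ (2 ^ (m + 3)) * (2 ^ (m * 2 ^ (m + 2) + m + 4) * 2 ^ (m * 2 ^ (m + 2) + m + 4)) := by
              rw [← pow_add, ← pow_add]
          _ ≤ (2 ^ (m + 2) * (2 ^ (m + 3)).choose (2 ^ (m + 2))) * ((2 ^ (m + 2))! * (2 ^ (m + 2))!) :=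
              Nat.mul_le_mul hC (Nat.mul_le_mul ih ih)
          _ = 2 ^ (m + 2) * ((2 ^ (m + 3)).choose (2 ^ (m + 2)) * (2 ^ (m + 2))! * (2 ^ (m + 2))!) := by
              ring
          _ = 2 ^ (m + 2) * (2 ^ (m + 3))! := by rw [hfac]
      exact Nat.le_of_mul_le_mul_left key (Nat.pow_pos (by norm_num))


private lemma num_core (n f c : ℕ) (hf : n + 7 ≤ f) (hc : 3 ≤ c) :
    2 ^ (2 ^ n) * (2 ^ (n + c)).choose (2 ^ (n + 6)) * (2 ^ f).choose (2 ^ (n + 6))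
      < (2 ^ (f + c)).choose (2 ^ (n + 6)) := by
  set s : ℕ := 2 ^ (n + 6) with hs
  obtain ⟨a, ha⟩ : ∃ a, f + c = a + 1 := ⟨f + c - 1, by omega⟩
  have han : n + 6 ≤ a := by omega
  have hsa : s ≤ 2 ^ a := Nat.pow_le_pow_right (by norm_num) han
  -- descending factorial bounds
  have hd1 : (2 ^ (n + c)).descFactorial s ≤ 2 ^ ((n + c) * s) := by
    calc (2 ^ (n + c)).descFactorial s ≤ (2 ^ (n + c)) ^ s := Nat.descFactorial_le_pow _ _
      _ = 2 ^ ((n + c) * s) := by rw [← pow_mul]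
  have hd2 : (2 ^ f).descFactorial s ≤ 2 ^ (f * s) := by
    calc (2 ^ f).descFactorial s ≤ (2 ^ f) ^ s := Nat.descFactorial_le_pow _ _
      _ = 2 ^ (f * s) := by rw [← pow_mul]
  have hd3 : 2 ^ (a * s) ≤ (2 ^ (f + c)).descFactorial s := by
    have hmid : (2:ℕ) ^ a ≤ 2 ^ (f + c) + 1 - s := by
      have h2a : (2:ℕ) ^ (f + c) = 2 * 2 ^ a := by rw [ha]; ring
      omega
    have h1 : ((2:ℕ) ^ a) ^ s ≤ (2 ^ (f + c) + 1 - s) ^ s := Nat.pow_le_pow_left hmid s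
    have h2 := Nat.pow_sub_le_descFactorial (2 ^ (f + c)) s
    have h3 := le_trans h1 h2
    rwa [← pow_mul] at h3
  have hfact : 2 ^ ((n + 4) * s + n + 8) ≤ s ! := by
    have := fact_lb (n + 4)
    have h62 : n + 4 + 2 = n + 6 := by omega
    rw [h62] at this
    calc (2:ℕ) ^ ((n + 4) * s + n + 8) = 2 ^ ((n + 4) * 2 ^ (n + 6) + (n + 4) + 4) := by
          rw [hs]; ring_nf
      _ ≤ s ! := this
  -- main multiplied inequality
  have key : (2 ^ (2 ^ n) * (2 ^ (n + c)).choose s * (2 ^ f).choose s) * (s ! * s !)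
      < (2 ^ (f + c)).choose s * (s ! * s !) := by
    have expand1 : (2 ^ (2 ^ n) * (2 ^ (n + c)).choose s * (2 ^ f).choose s) * (s ! * s !)
        = 2 ^ (2 ^ n) * ((s ! * (2 ^ (n + c)).choose s) * (s ! * (2 ^ f).choose s)) := by ring
    have expand2 : (2 ^ (f + c)).choose s * (s ! * s !)
        = (s ! * (2 ^ (f + c)).choose s) * s ! := by ring
    rw [expand1, expand2, ← Nat.descFactorial_eq_factorial_mul_choose,
      ← Nat.descFactorial_eq_factorial_mul_choose, ← Nat.descFactorial_eq_factorial_mul_choose]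
    calc 2 ^ (2 ^ n) * ((2 ^ (n + c)).descFactorial s * (2 ^ f).descFactorial s)
        ≤ 2 ^ (2 ^ n) * (2 ^ ((n + c) * s) * 2 ^ (f * s)) :=
          Nat.mul_le_mul_left _ (Nat.mul_le_mul hd1 hd2)
      _ = 2 ^ (2 ^ n + ((n + c) * s + f * s)) := by rw [← pow_add, ← pow_add]
      _ < 2 ^ (a * s + ((n + 4) * s + n + 8)) := by
          apply Nat.pow_lt_pow_right (by norm_num)
          have hns : 2 ^ n < s := by
            rw [hs]; exact Nat.pow_lt_pow_right (by norm_num) (by omega)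
          have e1 : (n + c) * s = n * s + c * s := by ring
          have e2 : (n + 4) * s = n * s + 4 * s := by ring
          have e3 : f * s + c * s = a * s + s := by
            calc f * s + c * s = (f + c) * s := by ring
              _ = (a + 1) * s := by rw [ha]
              _ = a * s + s := by ring
          linarith [hns, e1, e2, e3]
      _ = 2 ^ (a * s) * 2 ^ ((n + 4) * s + n + 8) := by rw [← pow_add]
      _ ≤ (2 ^ (f + c)).descFactorial s * s ! := Nat.mul_le_mul hd3 hfact
  exact Nat.lt_of_mul_lt_mul_right key


private lemma final_lt (X T M s : ℕ) (hsM : s ≤ M) (hMT : M ≤ T)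
    (hnum : X * M.choose s < T.choose s) :
    X * (T - s).choose (M - s) < T.choose M := by
  have hid := Nat.choose_mul (n := T) hsM
  have hZ : 0 < (T - s).choose (M - s) := Nat.choose_pos (Nat.sub_le_sub_right hMT s)
  have hkey : X * (T - s).choose (M - s) * M.choose s < T.choose M * M.choose s := by
    calc X * (T - s).choose (M - s) * M.choose s
        = X * M.choose s * (T - s).choose (M - s) := by ring
      _ < T.choose s * (T - s).choose (M - s) := mul_lt_mul_of_pos_right hnum hZ
      _ = T.choose M * M.choose s := hid.symm
  exact Nat.lt_of_mul_lt_mul_right hkey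

set_option maxHeartbeats 1000000 in
open scoped Classical in
/-- For all large `n`, every `k ≥ 1`, and every `f` with `n ≤ f ≤ nk − 3`, there is a
directed `k`-hypergraph (a set of `k`-tuples) on `2ⁿ` vertices with at least `2^f`
hyperedges such that every vertex set `U` with `|U| < 2^{n − (f−n)/k}` contains at
most `2^{n+6}` hyperedges. -/
theorem directed_hypergraphs_exist :
    ∃ n₀ : ℕ, ∀ n : ℕ, n₀ ≤ n → ∀ k : ℕ, 1 ≤ k → ∀ f : ℕ, n ≤ f → f ≤ n * k - 3 →
      ∃ E : Finset (Fin k → Fin (2 ^ n)),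
        2 ^ f ≤ E.card ∧
        ∀ U : Finset (Fin (2 ^ n)),
          (U.card : ℝ) < (2:ℝ) ^ ((n : ℝ) - ((f : ℝ) - (n : ℝ)) / (k : ℝ)) →
          (E.filter (fun t => ∀ i, t i ∈ U)).card ≤ 2 ^ (n + 6) := by
  refine ⟨7, fun n hn k hk f hnf hfk => ?_⟩
  have hk2 : 2 ≤ k := by
    by_contra h
    have hk1 : k = 1 := by omega
    subst hk1
    rw [mul_one] at hfk
    omega
  have h14 : 14 ≤ n * k := le_trans (by norm_num) (Nat.mul_le_mul hn hk2)
  have hf3 : f + 3 ≤ n * k := by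
    have h1 := Nat.add_le_add_right hfk 3
    rwa [Nat.sub_add_cancel (le_trans (by norm_num) h14)] at h1
  have hfnk : f ≤ n * k := le_trans (Nat.le_add_right f 3) hf3
  have hT : Fintype.card (Fin k → Fin (2 ^ n)) = 2 ^ (n * k) := by
    rw [Fintype.card_fun, Fintype.card_fin, Fintype.card_fin, ← pow_mul]
  by_cases hf6 : f ≤ n + 6
  · -- trivial case: any E of size 2^f works
    have hcard : 2 ^ f ≤ (Finset.univ : Finset (Fin k → Fin (2 ^ n))).card := by
      rw [Finset.card_univ, hT]
      exact Nat.pow_le_pow_right (by norm_num) hfnk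
    obtain ⟨E, -, hEcard⟩ := Finset.exists_subset_card_eq hcard
    refine ⟨E, hEcard.ge, fun U _ => ?_⟩
    calc (E.filter (fun t => ∀ i, t i ∈ U)).card ≤ E.card := Finset.card_filter_le _ _
      _ = 2 ^ f := hEcard
      _ ≤ 2 ^ (n + 6) := Nat.pow_le_pow_right (by norm_num) hf6
  · -- main case
    push_neg at hf6
    have hf7 : n + 7 ≤ f := hf6
    set c : ℕ := n * k - f with hcdef
    have hck : n * k = f + c := (Nat.add_sub_cancel' hfnk).symm
    have hc3 : 3 ≤ c := Nat.le_sub_of_add_le (by omega)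
    set s : ℕ := 2 ^ (n + 6) with hsdef
    set M : ℕ := 2 ^ f with hMdef
    set Ω : Finset (Finset (Fin k → Fin (2 ^ n))) :=
      Finset.powersetCard M Finset.univ with hΩdef
    have hΩcard : Ω.card = (2 ^ (n * k)).choose M := by
      rw [hΩdef, Finset.card_powersetCard, Finset.card_univ, hT]
    set 𝒰 : Finset (Finset (Fin (2 ^ n))) :=
      Finset.univ.filter (fun U => (U.card : ℝ) < (2:ℝ) ^ ((n : ℝ) - ((f : ℝ) - (n : ℝ)) / (k : ℝ)))
      with h𝒰def
    -- size bound for U in 𝒰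
    have hUk : ∀ U ∈ 𝒰, U.card ^ k ≤ 2 ^ (n + c) := by
      intro U hU
      have hUr : (U.card : ℝ) < (2:ℝ) ^ ((n : ℝ) - ((f : ℝ) - (n : ℝ)) / (k : ℝ)) :=
        (Finset.mem_filter.1 hU).2
      have hp : ((U.card : ℝ)) ^ k
          < ((2:ℝ) ^ ((n : ℝ) - ((f : ℝ) - (n : ℝ)) / (k : ℝ))) ^ k :=
        pow_lt_pow_left₀ hUr (Nat.cast_nonneg _) (by omega)
      have hkne : (k : ℝ) ≠ 0 := Nat.cast_ne_zero.2 (by omega)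
      have hrw : ((2:ℝ) ^ ((n : ℝ) - ((f : ℝ) - (n : ℝ)) / (k : ℝ))) ^ k
          = ((2 ^ (n + c) : ℕ) : ℝ) := by
        rw [← Real.rpow_natCast ((2:ℝ) ^ ((n : ℝ) - ((f : ℝ) - (n : ℝ)) / (k : ℝ))) k,
          ← Real.rpow_mul (by norm_num)]
        have hxk : ((n : ℝ) - ((f : ℝ) - (n : ℝ)) / (k : ℝ)) * (k : ℝ) = ((n + c : ℕ) : ℝ) := by
          rw [sub_mul, div_mul_cancel₀ _ hkne]
          have hcast : (n : ℝ) * (k : ℝ) = (f : ℝ) + (c : ℝ) := by exact_mod_cast hck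
          push_cast
          linarith
        rw [hxk, Real.rpow_natCast]
        push_cast
        ring
      rw [hrw] at hp
      exact_mod_cast hp.le
    -- counting supersets of a fixed s-element set
    have hsuper : ∀ S : Finset (Fin k → Fin (2 ^ n)), S.card = s →
        (Ω.filter (fun E => S ⊆ E)).card ≤ (2 ^ (n * k) - s).choose (M - s) := by
      intro S hS
      calc (Ω.filter (fun E => S ⊆ E)).card
          ≤ ((Finset.univ \ S).powersetCard (M - s)).card := by
            apply Finset.card_le_card_of_injOn (fun E => E \ S)
            · intro E hE
              rw [Finset.mem_coe, Finset.mem_filter] at hE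
              obtain ⟨hEΩ, hSE⟩ := hE
              have hEM : E.card = M := (Finset.mem_powersetCard.1 hEΩ).2
              refine Finset.mem_powersetCard.2 ⟨?_, ?_⟩
              · intro x hx
                rw [Finset.mem_sdiff] at hx ⊢
                exact ⟨Finset.mem_univ x, hx.2⟩
              · rw [Finset.card_sdiff_of_subset hSE, hEM, hS]
            · intro E1 h1 E2 h2 heq
              rw [Finset.mem_coe, Finset.mem_filter] at h1 h2
              have heq' : E1 \ S = E2 \ S := heq
              have e1 : E1 \ S ∪ S = E1 := Finset.sdiff_union_of_subset h1.2
              have e2 : E2 \ S ∪ S = E2 := Finset.sdiff_union_of_subset h2.2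
              rw [← e1, ← e2, heq']
        _ = (2 ^ (n * k) - s).choose (M - s) := by
            rw [Finset.card_powersetCard, Finset.card_sdiff_of_subset (Finset.subset_univ S),
              Finset.card_univ, hT, hS]
    -- the covering
    have hcover : Ω.filter (fun E => ∃ U ∈ 𝒰, s ≤ (E.filter (fun t => ∀ i, t i ∈ U)).card)
        ⊆ 𝒰.biUnion (fun U => ((Fintype.piFinset fun _ : Fin k => U).powersetCard s).biUnion
            (fun S => Ω.filter (fun E => S ⊆ E))) := by
      intro E hE
      rw [Finset.mem_filter] at hE
      obtain ⟨hEΩ, U, hU, hcard⟩ := hE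
      obtain ⟨S, hSsub, hScard⟩ := Finset.exists_subset_card_eq hcard
      refine Finset.mem_biUnion.2 ⟨U, hU, Finset.mem_biUnion.2 ⟨S, ?_, ?_⟩⟩
      · refine Finset.mem_powersetCard.2 ⟨fun t ht => ?_, hScard⟩
        have h' := hSsub ht
        rw [Finset.mem_filter] at h'
        exact Fintype.mem_piFinset.2 h'.2
      · exact Finset.mem_filter.2 ⟨hEΩ, fun t ht => (Finset.mem_filter.1 (hSsub ht)).1⟩
    -- inner sum bound
    have hinner : ∀ U ∈ 𝒰,
        ∑ S ∈ (Fintype.piFinset fun _ : Fin k => U).powersetCard s,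
          (Ω.filter (fun E => S ⊆ E)).card
        ≤ (2 ^ (n + c)).choose s * (2 ^ (n * k) - s).choose (M - s) := by
      intro U hU
      have hst : ∀ S ∈ (Fintype.piFinset fun _ : Fin k => U).powersetCard s,
          (Ω.filter (fun E => S ⊆ E)).card ≤ (2 ^ (n * k) - s).choose (M - s) :=
        fun S hS => hsuper S (Finset.mem_powersetCard.1 hS).2
      have h1 := Finset.sum_le_card_nsmul _ _ _ hst
      have h2 : ((Fintype.piFinset fun _ : Fin k => U).powersetCard s).card
          = (U.card ^ k).choose s := by
        simp [Finset.card_powersetCard]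
      rw [h2, smul_eq_mul] at h1
      exact h1.trans (Nat.mul_le_mul (Nat.choose_le_choose _ (hUk U hU)) le_rfl)
    -- final counting inequality
    have h𝒰card : 𝒰.card ≤ 2 ^ (2 ^ n) := by
      have h1 : 𝒰.card ≤ (Finset.univ : Finset (Finset (Fin (2 ^ n)))).card :=
        Finset.card_filter_le _ _
      rwa [Finset.card_univ, Fintype.card_finset, Fintype.card_fin] at h1
    have hnum := num_core n f c hf7 hc3
    rw [← hck] at hnum
    have hsM : s ≤ M := by
      rw [hsdef, hMdef]
      exact Nat.pow_le_pow_right (by norm_num) (by omega)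
    have hMT : M ≤ 2 ^ (n * k) := by
      rw [hMdef]
      exact Nat.pow_le_pow_right (by norm_num) hfnk
    have hfinal : 2 ^ (2 ^ n) * ((2 ^ (n + c)).choose s * (2 ^ (n * k) - s).choose (M - s))
        < Ω.card := by
      rw [hΩcard, ← mul_assoc]
      exact final_lt _ _ _ _ hsM hMT hnum
    have hbad : (Ω.filter (fun E => ∃ U ∈ 𝒰, s ≤ (E.filter (fun t => ∀ i, t i ∈ U)).card)).card
        < Ω.card := by
      calc (Ω.filter (fun E => ∃ U ∈ 𝒰, s ≤ (E.filter (fun t => ∀ i, t i ∈ U)).card)).card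
          ≤ (𝒰.biUnion (fun U => ((Fintype.piFinset fun _ : Fin k => U).powersetCard s).biUnion
              (fun S => Ω.filter (fun E => S ⊆ E)))).card := Finset.card_le_card hcover
        _ ≤ ∑ U ∈ 𝒰, (((Fintype.piFinset fun _ : Fin k => U).powersetCard s).biUnion
              (fun S => Ω.filter (fun E => S ⊆ E))).card := Finset.card_biUnion_le
        _ ≤ ∑ U ∈ 𝒰, ∑ S ∈ (Fintype.piFinset fun _ : Fin k => U).powersetCard s,
              (Ω.filter (fun E => S ⊆ E)).card :=
            Finset.sum_le_sum fun U _ => Finset.card_biUnion_le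
        _ ≤ ∑ _U ∈ 𝒰, (2 ^ (n + c)).choose s * (2 ^ (n * k) - s).choose (M - s) :=
            Finset.sum_le_sum hinner
        _ = 𝒰.card * ((2 ^ (n + c)).choose s * (2 ^ (n * k) - s).choose (M - s)) := by
            rw [Finset.sum_const, smul_eq_mul]
        _ ≤ 2 ^ (2 ^ n) * ((2 ^ (n + c)).choose s * (2 ^ (n * k) - s).choose (M - s)) :=
            Nat.mul_le_mul h𝒰card le_rfl
        _ < Ω.card := hfinal
    -- extract a good E
    have hex : ∃ E ∈ Ω, ¬ (∃ U ∈ 𝒰, s ≤ (E.filter (fun t => ∀ i, t i ∈ U)).card) := by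
      by_contra hcon
      push_neg at hcon
      have heq : Ω.filter (fun E => ∃ U ∈ 𝒰, s ≤ (E.filter (fun t => ∀ i, t i ∈ U)).card) = Ω :=
        Finset.filter_true_of_mem hcon
      rw [heq] at hbad
      exact lt_irrefl _ hbad
    obtain ⟨E, hEΩ, hEgood⟩ := hex
    refine ⟨E, ?_, ?_⟩
    · rw [(Finset.mem_powersetCard.1 hEΩ).2]
    · intro U hUcond
      have hU𝒰 : U ∈ 𝒰 := Finset.mem_filter.2 ⟨Finset.mem_univ U, hUcond⟩
      by_contra hgt
      push_neg at hgt
      exact hEgood ⟨U, hU𝒰, le_of_lt hgt⟩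
end
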